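/- Every Engel-type algebra is trimmed: for each n ≥ 1, the center of the n-th Engel-type algebra is one-dimensional, equal to ℝZ. -/
import Mathlib

abbrev EngelVec (n : ℕ) : Type := ℝ × (Fin n → ℝ) × (Fin n → ℝ) × ℝ
noncomputable def engelBracket (n : ℕ) (u v : EngelVec n) : EngelVec n :=
  (0, 0,
    fun i => u.2.1 i * v.1 - v.2.1 i * u.1,
    ∑ i : Fin n, (u.2.1 i * v.2.2.1 i - v.2.1 i * u.2.2.1 i))

noncomputable instance (n : ℕ) : LieRing (EngelVec n) :=
  { (inferInstance : AddCommGroup (EngelVec n)) with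
    bracket := engelBracket n
    add_lie := by
      intro x y z
      refine Prod.ext ?_ (Prod.ext ?_ (Prod.ext ?_ ?_)) <;>
        first
          | (simp [engelBracket]; done)
          | (funext i; simp [engelBracket]; done)
          | (funext i; simp [engelBracket]; ring)
          | (simp [engelBracket, mul_add, add_mul, Finset.sum_sub_distrib,
              Finset.sum_add_distrib]; ring)
    lie_add := by
      intro x y z
      refine Prod.ext ?_ (Prod.ext ?_ (Prod.ext ?_ ?_)) <;>
        first
          | (simp [engelBracket]; done)
          | (funext i; simp [engelBracket]; done)
          | (funext i; simp [engelBracket]; ring)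
          | (simp [engelBracket, mul_add, add_mul, Finset.sum_sub_distrib,
              Finset.sum_add_distrib]; ring)
    lie_self := by
      intro x
      refine Prod.ext ?_ (Prod.ext ?_ (Prod.ext ?_ ?_)) <;>
        first
          | (simp [engelBracket]; done)
          | (funext i; simp [engelBracket]; done)
          | (funext i; simp [engelBracket]; ring)
          | (simp [engelBracket]; ring)
    leibniz_lie := by
      intro x y z
      refine Prod.ext ?_ (Prod.ext ?_ (Prod.ext ?_ ?_)) <;>
        first
          | (simp [engelBracket]; done)
          | (funext i; simp [engelBracket]; done)
          | (funext i; simp [engelBracket]; ring)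
          | (simp [engelBracket, mul_sub, sub_mul, mul_comm, mul_left_comm,
              Finset.sum_sub_distrib]; ring) }

noncomputable instance (n : ℕ) : LieAlgebra ℝ (EngelVec n) :=
  { (inferInstance : Module ℝ (EngelVec n)) with
    lie_smul := by
      intro c x y
      refine Prod.ext ?_ (Prod.ext ?_ (Prod.ext ?_ ?_)) <;>
        first
          | (simp [Bracket.bracket, engelBracket]; done)
          | (funext i; simp [Bracket.bracket, engelBracket]; ring)
          | (simp [Bracket.bracket, engelBracket, mul_sub, mul_add, Finset.mul_sum,
              mul_comm, mul_left_comm, Finset.sum_sub_distrib];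
             exact Finset.sum_congr rfl fun i _ => by ring) }

noncomputable def engelX (n : ℕ) : EngelVec n := (1, 0, 0, 0)
noncomputable def engelY (n : ℕ) (i : Fin n) : EngelVec n := (0, Pi.single i 1, 0, 0)
noncomputable def engelT (n : ℕ) (i : Fin n) : EngelVec n := (0, 0, Pi.single i 1, 0)
noncomputable def engelZ (n : ℕ) : EngelVec n := (0, 0, 0, 1)

/-- The first layer `V₁ = span{X, Y₁, …, Yₙ}` of the `n`-th Engel-type algebra. -/
noncomputable def engelV1 (n : ℕ) : Submodule ℝ (EngelVec n) :=
  Submodule.span ℝ ({engelX n} ∪ Set.range (engelY n))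

/-- The second layer `V₂ = span{T₁, …, Tₙ}`. -/
noncomputable def engelV2 (n : ℕ) : Submodule ℝ (EngelVec n) :=
  Submodule.span ℝ (Set.range (engelT n))

/-- The third layer `V₃ = ℝZ`. -/
noncomputable def engelV3 (n : ℕ) : Submodule ℝ (EngelVec n) :=
  Submodule.span ℝ {engelZ n}

/-- The subspace `span{Y₁, …, Yₙ}` of the first layer. -/
noncomputable def engelYspan (n : ℕ) : Submodule ℝ (EngelVec n) :=
  Submodule.span ℝ (Set.range (engelY n))

/-- Every Engel-type algebra is trimmed: for each `n ≥ 1`, the center of the `n`-th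
Engel-type algebra is one-dimensional, equal to `ℝZ`. -/
theorem engel_center_is_one_dimensional (n : ℕ) (hn : 1 ≤ n) :
    Module.finrank ℝ ↥(LieAlgebra.center ℝ (EngelVec n)) = 1 ∧
    (LieAlgebra.center ℝ (EngelVec n)).toSubmodule = Submodule.span ℝ {engelZ n} := by
  have hZ : engelZ n ≠ 0 := by
    intro h
    have := congrArg (fun v : EngelVec n => v.2.2.2) h
    simp [engelZ] at this
  have key : (LieAlgebra.center ℝ (EngelVec n)).toSubmodule = Submodule.span ℝ {engelZ n} := by
    apply le_antisymm
    · intro x hx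
      rw [LieSubmodule.mem_toSubmodule] at hx
      have h := fun y => (LieModule.mem_maxTrivSubmodule ℝ _ _ x).mp hx y
      obtain ⟨j⟩ := Fin.pos_iff_nonempty.mp hn
      have h1 : x.1 = 0 := by
        have hb : engelBracket n (engelY n j) x = 0 := h (engelY n j)
        have := congrArg (fun v : EngelVec n => v.2.2.1 j) hb
        simpa [engelBracket, engelY] using this
      have hY : x.2.1 = 0 := by
        funext i
        have hb : engelBracket n (engelX n) x = 0 := h (engelX n)
        have := congrArg (fun v : EngelVec n => v.2.2.1 i) hb
        simpa [engelBracket, engelX] using this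
      have hT : x.2.2.1 = 0 := by
        funext i
        have hb : engelBracket n (engelY n i) x = 0 := h (engelY n i)
        have := congrArg (fun v : EngelVec n => v.2.2.2) hb
        simpa [engelBracket, engelY, Pi.single_apply, Finset.sum_ite_eq', hY] using this
      have hx' : x = x.2.2.2 • engelZ n := by
        refine Prod.ext ?_ (Prod.ext ?_ (Prod.ext ?_ ?_)) <;>
          simp [engelZ, h1, hY, hT]
      rw [hx']
      exact Submodule.smul_mem _ _ (Submodule.mem_span_singleton_self _)
    · rw [Submodule.span_le, Set.singleton_subset_iff]
      rw [SetLike.mem_coe, LieSubmodule.mem_toSubmodule]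
      rw [LieModule.mem_maxTrivSubmodule]
      intro y
      show engelBracket n y (engelZ n) = 0
      refine Prod.ext ?_ (Prod.ext ?_ (Prod.ext ?_ ?_)) <;>
        first
          | (simp [engelBracket, engelZ]; done)
          | (funext i; simp [engelBracket, engelZ])
  refine ⟨?_, key⟩
  have : Module.finrank ℝ ↥((LieAlgebra.center ℝ (EngelVec n)).toSubmodule) = 1 := by
    rw [key]
    exact finrank_span_singleton hZ
  exact this
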